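/- Let b ∈ {3, 4, 5} and let a be an integer with gcd(a, b) = 1, a ≠ 0, and a ≠ 1. Let S₁ ⊆ ℚ × ℚ be as in the Hoste–Shanahan table for the Whitehead link: the union of {(0,0), (-4,-2), (-2,-4)}, {(2/t, 2t) : t > 0}, {(-2/t - 2, -2t) : 0 < t ≤ 1}, {(-2/t, -2 - 2t) : t ≥ 1}, and {(-3 + s, -3 - s) : -1 ≤ s ≤ 1}. Then there is no y ∈ ℚ with (1, y) ∈ S₁ and y = 6 - b/a. -/
import Mathlib

def S₁ : Set (ℚ × ℚ) :=
  ({((0 : ℚ), (0 : ℚ)), (-4, -2), (-2, -4)} : Set (ℚ × ℚ)) ∪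
  {p | ∃ t : ℚ, 0 < t ∧ p = (2 / t, 2 * t)} ∪
  {p | ∃ t : ℚ, 0 < t ∧ t ≤ 1 ∧ p = (-2 / t - 2, -2 * t)} ∪
  {p | ∃ t : ℚ, 1 ≤ t ∧ p = (-2 / t, -2 - 2 * t)} ∪
  {p | ∃ s : ℚ, -1 ≤ s ∧ s ≤ 1 ∧ p = (-3 + s, -3 - s)}

theorem stmt_12 (b a : ℤ) (hb : b ∈ ({3, 4, 5} : Set ℤ)) (ha : a ≠ 0) (ha1 : a ≠ 1)
    (hgcd : Int.gcd a b = 1) :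
    ¬ ∃ y : ℚ, (1, y) ∈ S₁ ∧ y = 6 - (b : ℚ) / a := by
  rintro ⟨y, hy, hval⟩
  have hy4 : y = 4 := by
    rcases hy with ((((h | h | h) | ⟨t, ht, h⟩) | ⟨t, ht, ht1, h⟩) | ⟨t, ht, h⟩) | ⟨s, hs, hs1, h⟩
    · rw [Prod.mk.injEq] at h; norm_num at h
    · rw [Prod.mk.injEq] at h; norm_num at h
    · simp only [Set.mem_singleton_iff, Prod.mk.injEq] at h; norm_num at h
    · rw [Prod.mk.injEq] at h
      obtain ⟨h1, h2⟩ := h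
      have htne : t ≠ 0 := ne_of_gt ht
      have : t = 2 := by field_simp at h1; linarith
      rw [h2, this]; norm_num
    · rw [Prod.mk.injEq] at h
      obtain ⟨h1, h2⟩ := h
      have htne : t ≠ 0 := ne_of_gt ht
      field_simp at h1
      nlinarith
    · rw [Prod.mk.injEq] at h
      obtain ⟨h1, h2⟩ := h
      have htne : t ≠ 0 := by positivity
      field_simp at h1
      nlinarith
    · rw [Prod.mk.injEq] at h
      obtain ⟨h1, h2⟩ := h
      linarith
  rw [hy4] at hval
  have haq : (a : ℚ) ≠ 0 := Int.cast_ne_zero.mpr ha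
  have hba : (b : ℚ) = 2 * a := by field_simp at hval; linarith
  have hb2a : b = 2 * a := by exact_mod_cast hba
  have hdvd : a.natAbs ∣ Int.gcd a b :=
    Nat.dvd_gcd dvd_rfl (by rw [hb2a]; exact Int.natAbs_dvd_natAbs.mpr (dvd_mul_left a 2))
  rw [hgcd] at hdvd
  have : a = 1 ∨ a = -1 := by
    have := Nat.le_of_dvd one_pos hdvd
    omega
  rcases hb with h3 | h4 | h5 <;> simp_all <;> omega
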